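/- Let p > 3 be prime and E : y² = x³ + Ax + B over 𝔽_p with 4A³ + 27B² ≠ 0. Let G = (x_G, y_G), W₀ ∈ E(𝔽_p), and set W_n = nG ⊕ W₀, x_n = x(W_n). Suppose W_i ≠ ±G and W_{i−1}, W_i, W_{i+1} ≠ 𝒪 for some i ≥ 2. Then (2x_i² + 2x_i(x_{i−1}+x_{i+1}))·x_G + (2x_i − (x_{i−1}+x_{i+1}))·x_G² + 2x_i·A + 2B + 2y_G² − 2x_G³ = (x_{i−1}+x_{i+1})·x_i² in 𝔽_p. -/

import Mathlib

/-- The elliptic curve `y² = x³ + Ax + B` in affine Weierstrass form. -/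
def Ecurve {k : Type*} [CommRing k] (A B : k) : WeierstrassCurve.Affine k :=
  { a₁ := 0, a₂ := 0, a₃ := 0, a₄ := A, a₆ := B }

/-- The x-coordinate of a nonsingular point, with the convention `x(𝒪) = 0`. -/
def xcoord {k : Type*} [Field k] {W : WeierstrassCurve.Affine k} : W.Point → k
  | .zero => 0
  | @WeierstrassCurve.Affine.Point.some _ _ _ x _ _ => x

/-- The linear relation (equation (7) of the paper) satisfied by the secret parameters:
for the generator `x_n = x(nG ⊕ W₀)` over `𝔽_p` (`p > 3`, `4A³ + 27B² ≠ 0`), if `i ≥ 2`,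
`W_i ≠ ±G` and `W_{i−1}, W_i, W_{i+1} ≠ 𝒪`, then
`(2x_i² + 2x_i(x_{i−1}+x_{i+1}))x_G + (2x_i − (x_{i−1}+x_{i+1}))x_G² + 2x_iA + 2B + 2y_G²`
`− 2x_G³ = (x_{i−1}+x_{i+1})x_i²` in `𝔽_p`. -/
theorem stmt11 (p : ℕ) [Fact p.Prime] (hp : 3 < p)
    (A B x_G y_G : ZMod p)
    (hΔ : 4 * A ^ 3 + 27 * B ^ 2 ≠ 0)
    (hGns : (Ecurve A B).Nonsingular x_G y_G)
    (G W₀ : (Ecurve A B).Point)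
    (hGdef : G = WeierstrassCurve.Affine.Point.some _ _ hGns)
    (Wn : ℕ → (Ecurve A B).Point) (hWn : ∀ n, Wn n = n • G + W₀)
    (xs : ℕ → ZMod p) (hxs : ∀ n, xs n = xcoord (Wn n))
    (i : ℕ) (hi : 2 ≤ i)
    (hWG : Wn i ≠ G ∧ Wn i ≠ -G)
    (hO : Wn (i - 1) ≠ 0 ∧ Wn i ≠ 0 ∧ Wn (i + 1) ≠ 0) :
    (2 * xs i ^ 2 + 2 * xs i * (xs (i - 1) + xs (i + 1))) * x_G +
        (2 * xs i - (xs (i - 1) + xs (i + 1))) * x_G ^ 2 +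
        2 * xs i * A + 2 * B + 2 * y_G ^ 2 - 2 * x_G ^ 3 =
      (xs (i - 1) + xs (i + 1)) * xs i ^ 2 := by
  obtain ⟨hWGp, hWGm⟩ := hWG
  obtain ⟨hO1, hO2, hO3⟩ := hO
  rcases hWi : Wn i with _ | @⟨xi, yi, hns⟩
  · exact absurd hWi hO2
  have heqi : yi ^ 2 = xi ^ 3 + A * xi + B := by
    have h := hns.1
    rw [WeierstrassCurve.Affine.equation_iff] at h
    simpa [Ecurve] using h
  have heqG : y_G ^ 2 = x_G ^ 3 + A * x_G + B := by
    have h := hGns.1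
    rw [WeierstrassCurve.Affine.equation_iff] at h
    simpa [Ecurve] using h
  have hxne : x_G ≠ xi := by
    intro hx
    subst hx
    have h2 : (yi - y_G) * (yi + y_G) = 0 := by linear_combination heqi - heqG
    rcases mul_eq_zero.mp h2 with h | h
    · apply hWGp
      rw [hWi, hGdef]
      have hy : yi = y_G := by rwa [sub_eq_zero] at h
      subst hy
      rfl
    · apply hWGm
      rw [hWi, hGdef, WeierstrassCurve.Affine.Point.neg_some]
      have hy : yi = (Ecurve A B).negY x_G y_G := by
        simp only [WeierstrassCurve.Affine.negY, Ecurve]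
        linear_combination h
      subst hy
      rfl
  have hplus : Wn (i+1) = G + Wn i := by
    rw [hWn, hWn, succ_nsmul]
    abel
  have hminus : Wn (i-1) = -G + Wn i := by
    have h1 : i - 1 + 1 = i := by omega
    rw [hWn, hWn, ← h1, succ_nsmul, Nat.add_sub_cancel]
    abel
  have hx1 : xs (i+1) = (Ecurve A B).addX x_G xi ((Ecurve A B).slope x_G xi y_G yi) := by
    rw [hxs, hplus, hWi, hGdef, WeierstrassCurve.Affine.Point.add_of_X_ne hxne]
    rfl
  have hx2 : xs (i-1) = (Ecurve A B).addX x_G xi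
      ((Ecurve A B).slope x_G xi ((Ecurve A B).negY x_G y_G) yi) := by
    rw [hxs, hminus, hWi, hGdef, WeierstrassCurve.Affine.Point.neg_some,
      WeierstrassCurve.Affine.Point.add_of_X_ne hxne]
    rfl
  have hxi : xs i = xi := by rw [hxs, hWi]; rfl
  have hd : x_G - xi ≠ 0 := sub_ne_zero.mpr hxne
  rw [hx1, hx2, hxi]
  simp only [WeierstrassCurve.Affine.addX, WeierstrassCurve.Affine.negY,
    WeierstrassCurve.Affine.slope_of_X_ne hxne, Ecurve]
  field_simp
  linear_combination (4 * xi * x_G - 2 * x_G ^ 2 - 2 * xi ^ 2) * heqi
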